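/- Let T > 0, let h : ℝ → ℝ be Lipschitz continuous with Lipschitz constant L, let α : [0,T] → ℝ be continuous with A := sup_{t∈[0,T]} |α(t)|, and let y₀, y₀' ∈ ℝ and Θ, Θ' : [0,T] → ℝ be càdlàg. If Y and Y' are càdlàg functions satisfying Y(t) = y₀ + (Θ(t) − Θ(0)) − ∫_0^t h(Y(s))·α(s) ds and Y'(t) = y₀' + (Θ'(t) − Θ'(0)) − ∫_0^t h(Y'(s))·α(s) ds for all t ∈ [0,T], then sup_{t∈[0,T]} |Y(t) − Y'(t)| ≤ (|y₀ − y₀'| + 2·sup_{t∈[0,T]} |Θ(t) − Θ'(t)|)·exp(L·A·T). In particular, the solution map Θ ↦ Y is continuous with respect to the supremum norm on càdlàg functions. -/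

import Mathlib

open Filter Set MeasureTheory Topology

noncomputable section

/-- A function `x : ℝ → ℝ` is càdlàg on `[0,T]`: right-continuous at every `t ∈ [0,T)`
and with a (finite) left limit at every `t ∈ (0,T]`. -/
def Cadlag (T : ℝ) (x : ℝ → ℝ) : Prop :=
  (∀ t ∈ Set.Ico (0:ℝ) T, Filter.Tendsto x (nhdsWithin t (Set.Ici t)) (nhds (x t))) ∧
  (∀ t ∈ Set.Ioc (0:ℝ) T, ∃ L : ℝ, Filter.Tendsto x (nhdsWithin t (Set.Iio t)) (nhds L))

/-- `Y` is the market impact process on `[0,T]` driven by the càdlàg strategy `Θ`. -/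
def ImpactSol (T : ℝ) (h α : ℝ → ℝ) (y₀ : ℝ) (Θ Y : ℝ → ℝ) : Prop :=
  Cadlag T Y ∧ ∀ t ∈ Set.Icc (0:ℝ) T,
    Y t = y₀ + (Θ t - Θ 0) - ∫ s in (0:ℝ)..t, h (Y s) * α s

lemma cadlag_bounded {T : ℝ} (hT : 0 < T) {Y : ℝ → ℝ} (hY : Cadlag T Y) :
    ∃ M : ℝ, ∀ t ∈ Set.Icc (0:ℝ) T, |Y t| ≤ M := by
  have key : ∀ x : ℝ, ∃ (U : Set ℝ) (M : ℝ),
      x ∈ Set.Icc (0:ℝ) T → U ∈ 𝓝 x ∧ ∀ s ∈ U ∩ Set.Icc (0:ℝ) T, |Y s| ≤ M := by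
    intro x
    by_cases hx : x ∈ Set.Icc (0:ℝ) T
    swap
    · exact ⟨Set.univ, 0, fun h => absurd h hx⟩
    have hright : ∃ u ∈ 𝓝 x, ∃ M₁ : ℝ, ∀ s ∈ u ∩ Set.Icc (0:ℝ) T, x ≤ s → |Y s| ≤ M₁ := by
      rcases eq_or_lt_of_le hx.2 with hxT | hxT
      · refine ⟨Set.univ, univ_mem, |Y x|, fun s hs hxs => ?_⟩
        have hsx : s = x := le_antisymm (hxT ▸ hs.2.2) hxs
        rw [hsx]
      · have hr := hY.1 x ⟨hx.1, hxT⟩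
        have hev : ∀ᶠ s in 𝓝[Set.Ici x] x, |Y s| ≤ |Y x| + 1 := by
          filter_upwards [hr (Metric.ball_mem_nhds (Y x) one_pos)] with s hs
          have h1 : |Y s - Y x| < 1 := by simpa [Real.dist_eq] using hs
          have h2 : |Y s| ≤ |Y s - Y x| + |Y x| := by
            simpa using abs_add_le (Y s - Y x) (Y x)
          linarith
        rcases mem_nhdsWithin.1 hev with ⟨u, huo, hxu, hu⟩
        exact ⟨u, huo.mem_nhds hxu, |Y x| + 1, fun s hs hxs => hu ⟨hs.1, hxs⟩⟩
    have hleft : ∃ v ∈ 𝓝 x, ∃ M₂ : ℝ, ∀ s ∈ v ∩ Set.Icc (0:ℝ) T, s < x → |Y s| ≤ M₂ := by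
      rcases eq_or_lt_of_le hx.1 with hx0 | hx0
      · exact ⟨Set.univ, univ_mem, 0, fun s hs hsx => absurd (hx0 ▸ hs.2.1) (not_le.2 hsx)⟩
      · obtain ⟨Lx, hL⟩ := hY.2 x ⟨hx0, hx.2⟩
        have hev : ∀ᶠ s in 𝓝[Set.Iio x] x, |Y s| ≤ |Lx| + 1 := by
          filter_upwards [hL (Metric.ball_mem_nhds Lx one_pos)] with s hs
          have h1 : |Y s - Lx| < 1 := by simpa [Real.dist_eq] using hs
          have h2 : |Y s| ≤ |Y s - Lx| + |Lx| := by
            simpa using abs_add_le (Y s - Lx) Lx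
          linarith
        rcases mem_nhdsWithin.1 hev with ⟨v, hvo, hxv, hv⟩
        exact ⟨v, hvo.mem_nhds hxv, |Lx| + 1, fun s hs hsx => hv ⟨hs.1, hsx⟩⟩
    obtain ⟨u, hu, M₁, hM₁⟩ := hright
    obtain ⟨v, hv, M₂, hM₂⟩ := hleft
    refine ⟨u ∩ v, max M₁ M₂, fun _ => ⟨inter_mem hu hv, fun s hs => ?_⟩⟩
    rcases lt_or_ge s x with hsx | hsx
    · exact le_trans (hM₂ s ⟨hs.1.2, hs.2⟩ hsx) (le_max_right _ _)
    · exact le_trans (hM₁ s ⟨hs.1.1, hs.2⟩ hsx) (le_max_left _ _)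
  choose U M hUM using key
  obtain ⟨F, hF, hcover⟩ := isCompact_Icc.elim_nhds_subcover U (fun x hx => (hUM x hx).1)
  have hFne : F.Nonempty := by
    rcases Set.mem_iUnion₂.1 (hcover ⟨le_refl 0, hT.le⟩) with ⟨x, hxF, _⟩
    exact ⟨x, hxF⟩
  refine ⟨F.sup' hFne M, fun t ht => ?_⟩
  rcases Set.mem_iUnion₂.1 (hcover ht) with ⟨x, hxF, hxU⟩
  exact le_trans ((hUM x (hF x hxF)).2 t ⟨hxU, ht⟩) (Finset.le_sup' M hxF)

lemma cadlag_aestronglyMeasurable {T : ℝ} (hT : 0 < T) {Y : ℝ → ℝ} (hY : Cadlag T Y) :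
    AEStronglyMeasurable Y (volume.restrict (Set.Icc (0:ℝ) T)) := by
  set c : ℝ → ℝ := fun t => max 0 (min T t) with hc
  set f : ℕ → ℝ → ℝ := fun n t => Y (c ((⌈t * 2 ^ n⌉ : ℤ) / 2 ^ n)) with hf
  have hfm : ∀ n, Measurable (f n) := by
    intro n
    exact (measurable_from_top (f := fun k : ℤ => Y (c ((k : ℝ) / 2 ^ n)))).comp
      ((measurable_id.mul_const _).ceil)
  have hlim : Tendsto f atTop (𝓝 fun t => Y (c t)) := by
    rw [tendsto_pi_nhds]
    intro t
    set d : ℕ → ℝ := fun n => ((⌈t * 2 ^ n⌉ : ℤ) : ℝ) / 2 ^ n with hd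
    have h2n : ∀ n : ℕ, (0:ℝ) < 2 ^ n := fun n => pow_pos two_pos n
    have hdge : ∀ n, t ≤ d n := by
      intro n
      rw [hd, le_div_iff₀ (h2n n)]
      exact Int.le_ceil (t * 2 ^ n)
    have hdlt : ∀ n, d n ≤ t + ((2:ℝ) ^ n)⁻¹ := by
      intro n
      rw [hd, div_le_iff₀ (h2n n)]
      have := (Int.ceil_lt_add_one (t * 2 ^ n)).le
      calc ((⌈t * 2 ^ n⌉ : ℤ) : ℝ) ≤ t * 2 ^ n + 1 := this
        _ = (t + ((2:ℝ) ^ n)⁻¹) * 2 ^ n := by field_simp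
    have hdt : Tendsto d atTop (𝓝 t) := by
      have h1 : Tendsto (fun n : ℕ => t + ((2:ℝ) ^ n)⁻¹) atTop (𝓝 (t + 0)) := by
        exact tendsto_const_nhds.add
          (tendsto_inv_atTop_zero.comp (tendsto_pow_atTop_atTop_of_one_lt one_lt_two))
      rw [add_zero] at h1
      exact tendsto_of_tendsto_of_tendsto_of_le_of_le tendsto_const_nhds h1 hdge hdlt
    rcases lt_or_ge t 0 with ht0 | ht0
    · -- t < 0 : eventually d n < 0, so c (d n) = 0 = c t
      have hev : ∀ᶠ n in atTop, d n < 0 := hdt.eventually (Iio_mem_nhds ht0)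
      have hct : c t = 0 := by
        show max 0 (min T t) = 0
        rw [min_eq_right (ht0.le.trans hT.le), max_eq_left ht0.le]
      have heq : ∀ᶠ n in atTop, Y (c t) = f n t := by
        filter_upwards [hev] with n hn
        show Y (c t) = Y (max 0 (min T (d n)))
        rw [hct, min_eq_right (hn.le.trans hT.le), max_eq_left hn.le]
      exact tendsto_const_nhds.congr' heq
    · rcases lt_or_ge t T with htT | htT
      · -- 0 ≤ t < T
        have hct : c t = t := by
          rw [hc]; simp only [min_eq_right htT.le, max_eq_right ht0]
        have hrn : ∀ n, t ≤ c (d n) := by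
          intro n
          rw [hc]
          have : t ≤ min T (d n) := le_min htT.le (hdge n)
          exact le_trans this (le_max_right _ _)
        have hcd : Tendsto (fun n => c (d n)) atTop (𝓝 t) := by
          have hcc : Continuous c := continuous_const.max (continuous_const.min continuous_id)
          have := (hcc.tendsto t).comp hdt
          rwa [hct] at this
        have htend : Tendsto (fun n => c (d n)) atTop (𝓝[Set.Ici t] t) :=
          tendsto_nhdsWithin_of_tendsto_nhds_of_eventually_within _ hcd
            (Eventually.of_forall hrn)
        have := (hY.1 t ⟨ht0, htT⟩).comp htend
        rw [hct]
        exact this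
      · -- t ≥ T : c (d n) = T = c t
        have hct : c t = T := by
          rw [hc]; simp only [min_eq_left htT, max_eq_right hT.le]
        have hcd : ∀ n, c (d n) = T := by
          intro n
          show max 0 (min T (d n)) = T
          rw [min_eq_left (le_trans htT (hdge n)), max_eq_right hT.le]
        refine tendsto_const_nhds.congr' (Eventually.of_forall fun n => ?_)
        show Y (c t) = Y (c (d n))
        rw [hcd, hct]
  have hYc : Measurable fun t => Y (c t) := measurable_of_tendsto_metrizable hfm hlim
  refine hYc.aestronglyMeasurable.congr ?_
  refine (ae_restrict_iff' measurableSet_Icc).2 (ae_of_all _ fun t ht => ?_)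
  have hct : c t = t := by
    show max 0 (min T t) = t
    rw [min_eq_right ht.2, max_eq_right ht.1]
  show Y (c t) = Y t
  rw [hct]

/-- Gronwall-type stability estimate for the impact process; with
`A = sup_{[0,T]} |α|`, solutions for data `(y₀, Θ)` and `(y₀', Θ')` satisfy
`sup_{[0,T]} |Y − Y'| ≤ (|y₀ − y₀'| + 2 sup_{[0,T]} |Θ − Θ'|) e^{L A T}`;
in particular the solution map is continuous in the supremum norm. -/
theorem impact_process_sup_norm_stability
    (T : ℝ) (hT : 0 < T) (h α : ℝ → ℝ) (L : NNReal)
    (hh : LipschitzWith L h) (hα : ContinuousOn α (Set.Icc 0 T))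
    (A : ℝ) (hA : A = sSup ((fun s => |α s|) '' Set.Icc (0:ℝ) T))
    (y₀ y₀' : ℝ) (Θ Θ' Y Y' : ℝ → ℝ)
    (hΘ : Cadlag T Θ) (hΘ' : Cadlag T Θ')
    (hY : ImpactSol T h α y₀ Θ Y) (hY' : ImpactSol T h α y₀' Θ' Y') :
    ∀ t ∈ Set.Icc (0:ℝ) T,
      |Y t - Y' t| ≤
        (|y₀ - y₀'| + 2 * sSup ((fun s => |Θ s - Θ' s|) '' Set.Icc (0:ℝ) T))
          * Real.exp ((L : ℝ) * A * T) := by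
  obtain ⟨hYc, hYeq⟩ := hY
  obtain ⟨hY'c, hY'eq⟩ := hY'
  have h0T : (0:ℝ) ∈ Set.Icc (0:ℝ) T := ⟨le_refl 0, hT.le⟩
  -- α bounds
  have hAbdd : BddAbove ((fun s => |α s|) '' Set.Icc (0:ℝ) T) :=
    isCompact_Icc.bddAbove_image hα.abs
  have hαA : ∀ s ∈ Set.Icc (0:ℝ) T, |α s| ≤ A := fun s hs => hA ▸ le_csSup hAbdd ⟨s, hs, rfl⟩
  have hA0 : 0 ≤ A := le_trans (abs_nonneg _) (hαA 0 h0T)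
  set K : ℝ := (L : ℝ) * A with hKdef
  have hK0 : 0 ≤ K := mul_nonneg L.coe_nonneg hA0
  -- Θ sup
  obtain ⟨MΘ, hMΘ⟩ := cadlag_bounded hT hΘ
  obtain ⟨MΘ', hMΘ'⟩ := cadlag_bounded hT hΘ'
  set S : ℝ := sSup ((fun s => |Θ s - Θ' s|) '' Set.Icc (0:ℝ) T) with hSdef
  have hSbdd : BddAbove ((fun s => |Θ s - Θ' s|) '' Set.Icc (0:ℝ) T) := by
    refine ⟨MΘ + MΘ', ?_⟩
    rintro _ ⟨s, hs, rfl⟩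
    calc |Θ s - Θ' s| ≤ |Θ s| + |Θ' s| := abs_sub _ _
      _ ≤ MΘ + MΘ' := add_le_add (hMΘ s hs) (hMΘ' s hs)
  have hSle : ∀ s ∈ Set.Icc (0:ℝ) T, |Θ s - Θ' s| ≤ S := fun s hs => le_csSup hSbdd ⟨s, hs, rfl⟩
  have hS0 : 0 ≤ S := le_trans (abs_nonneg _) (hSle 0 h0T)
  set D : ℝ := |y₀ - y₀'| + 2 * S with hDdef
  have hD0 : 0 ≤ D := add_nonneg (abs_nonneg _) (by linarith)
  -- bounds and measurability
  obtain ⟨MY, hMY⟩ := cadlag_bounded hT hYc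
  obtain ⟨MY', hMY'⟩ := cadlag_bounded hT hY'c
  have hMY0 : 0 ≤ MY := le_trans (abs_nonneg _) (hMY 0 h0T)
  have hMY'0 : 0 ≤ MY' := le_trans (abs_nonneg _) (hMY' 0 h0T)
  have mY := cadlag_aestronglyMeasurable hT hYc
  have mY' := cadlag_aestronglyMeasurable hT hY'c
  have mα : AEStronglyMeasurable α (volume.restrict (Set.Icc (0:ℝ) T)) :=
    hα.aestronglyMeasurable measurableSet_Icc
  set g : ℝ → ℝ := fun s => |Y s - Y' s| with hgdef
  have mg : AEStronglyMeasurable g (volume.restrict (Set.Icc (0:ℝ) T)) := by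
    have := (mY.sub mY').norm
    simpa [Real.norm_eq_abs] using this
  have hIccfin : volume (Set.Icc (0:ℝ) T) ≠ ⊤ := by
    simp [Real.volume_Icc]
  have gInt : IntegrableOn g (Set.Icc (0:ℝ) T) volume := by
    refine ⟨mg, HasFiniteIntegral.restrict_of_bounded (MY + MY') hIccfin.lt_top ?_⟩
    refine (ae_restrict_iff' measurableSet_Icc).2 (ae_of_all _ fun s hs => ?_)
    simp only [hgdef, Real.norm_eq_abs, abs_abs]
    calc |Y s - Y' s| ≤ |Y s| + |Y' s| := abs_sub _ _
      _ ≤ MY + MY' := add_le_add (hMY s hs) (hMY' s hs)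
  -- integrability of s ↦ h (Y s) * α s
  have hlip : ∀ (Z : ℝ → ℝ) (MZ : ℝ), (∀ s ∈ Set.Icc (0:ℝ) T, |Z s| ≤ MZ) →
      ∀ s ∈ Set.Icc (0:ℝ) T, |h (Z s)| ≤ (L : ℝ) * MZ + |h 0| := by
    intro Z MZ hMZ s hs
    have h1 : |h (Z s) - h 0| ≤ (L : ℝ) * |Z s| := by
      have := hh.dist_le_mul (Z s) 0
      simpa [Real.dist_eq] using this
    have h2 : (L : ℝ) * |Z s| ≤ (L : ℝ) * MZ :=
      mul_le_mul_of_nonneg_left (hMZ s hs) L.coe_nonneg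
    have h3 : |h (Z s)| ≤ |h (Z s) - h 0| + |h 0| := by
      simpa using abs_add_le (h (Z s) - h 0) (h 0)
    linarith
  have fInt : ∀ (Z : ℝ → ℝ), AEStronglyMeasurable Z (volume.restrict (Set.Icc (0:ℝ) T)) →
      ∀ (MZ : ℝ), (∀ s ∈ Set.Icc (0:ℝ) T, |Z s| ≤ MZ) →
      IntegrableOn (fun s => h (Z s) * α s) (Set.Icc (0:ℝ) T) volume := by
    intro Z mZ MZ hMZ
    refine ⟨(hh.continuous.comp_aestronglyMeasurable mZ).mul mα,
      HasFiniteIntegral.restrict_of_bounded (((L : ℝ) * MZ + |h 0|) * A)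
        hIccfin.lt_top ?_⟩
    refine (ae_restrict_iff' measurableSet_Icc).2 (ae_of_all _ fun s hs => ?_)
    rw [Real.norm_eq_abs, abs_mul]
    exact mul_le_mul (hlip Z MZ hMZ s hs) (hαA s hs) (abs_nonneg _)
      (le_trans (abs_nonneg _) (hlip Z MZ hMZ s hs))
  have f1Int := fInt Y mY MY hMY
  have f1'Int := fInt Y' mY' MY' hMY'
  have intInt : ∀ (f : ℝ → ℝ), IntegrableOn f (Set.Icc (0:ℝ) T) volume →
      ∀ t ∈ Set.Icc (0:ℝ) T, IntervalIntegrable f volume 0 t := by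
    intro f hf t ht
    rw [intervalIntegrable_iff_integrableOn_Ioc_of_le ht.1]
    exact hf.mono_set (Set.Ioc_subset_Icc_self.trans (Set.Icc_subset_Icc le_rfl ht.2))
  -- the Gronwall-type integral inequality
  have key : ∀ t ∈ Set.Icc (0:ℝ) T, g t ≤ D + K * ∫ s in (0:ℝ)..t, g s := by
    intro t ht
    have i1 := intInt _ f1Int t ht
    have i1' := intInt _ f1'Int t ht
    have ig := intInt _ gInt t ht
    have hintnn : 0 ≤ ∫ s in (0:ℝ)..t, g s :=
      intervalIntegral.integral_nonneg ht.1 (fun s _ => abs_nonneg _)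
    have hdiff : Y t - Y' t
        = (y₀ - y₀') + ((Θ t - Θ' t) - (Θ 0 - Θ' 0))
          - ∫ s in (0:ℝ)..t, (h (Y s) * α s - h (Y' s) * α s) := by
      rw [intervalIntegral.integral_sub i1 i1', hYeq t ht, hY'eq t ht]; ring
    have hbound : |∫ s in (0:ℝ)..t, (h (Y s) * α s - h (Y' s) * α s)|
        ≤ K * ∫ s in (0:ℝ)..t, g s := by
      have hgK : IntervalIntegrable (fun s => K * g s) volume 0 t := ig.const_mul K
      have hptwise : ∀ᵐ s ∂volume.restrict (Set.uIoc (0:ℝ) t),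
          ‖h (Y s) * α s - h (Y' s) * α s‖ ≤ K * g s := by
        refine (ae_restrict_iff' measurableSet_uIoc).2 (ae_of_all _ fun s hs => ?_)
        have hsmem : s ∈ Set.Icc (0:ℝ) T := by
          rw [Set.uIoc_of_le ht.1] at hs
          exact ⟨hs.1.le, hs.2.trans ht.2⟩
        have h1 : |h (Y s) - h (Y' s)| ≤ (L : ℝ) * g s := by
          have := hh.dist_le_mul (Y s) (Y' s)
          simpa [Real.dist_eq, hgdef] using this
        have h2 : ‖h (Y s) * α s - h (Y' s) * α s‖ = |h (Y s) - h (Y' s)| * |α s| := by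
          rw [Real.norm_eq_abs, ← abs_mul, sub_mul]
        rw [h2]
        calc |h (Y s) - h (Y' s)| * |α s| ≤ ((L : ℝ) * g s) * A :=
              mul_le_mul h1 (hαA s hsmem) (abs_nonneg _)
                (mul_nonneg L.coe_nonneg (abs_nonneg _))
          _ = K * g s := by rw [hKdef]; ring
      have := intervalIntegral.norm_integral_le_of_norm_le ht.1
        (((ae_restrict_iff' measurableSet_uIoc).1 hptwise).mono fun s hs hs' =>
          hs (by rwa [Set.uIoc_of_le ht.1])) hgK
      rw [Real.norm_eq_abs] at this
      refine le_trans this ?_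
      rw [intervalIntegral.integral_const_mul]
    have e1 : |Θ t - Θ' t| ≤ S := hSle t ht
    have e0 : |Θ 0 - Θ' 0| ≤ S := hSle 0 h0T
    have habs : g t ≤ |y₀ - y₀'| + (|Θ t - Θ' t| + |Θ 0 - Θ' 0|)
        + |∫ s in (0:ℝ)..t, (h (Y s) * α s - h (Y' s) * α s)| := by
      rw [hgdef]
      show |Y t - Y' t| ≤ _
      rw [hdiff]
      have t1 := abs_sub ((y₀ - y₀') + ((Θ t - Θ' t) - (Θ 0 - Θ' 0)))
        (∫ s in (0:ℝ)..t, (h (Y s) * α s - h (Y' s) * α s))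
      have t2 := abs_add_le (y₀ - y₀') ((Θ t - Θ' t) - (Θ 0 - Θ' 0))
      have t3 := abs_sub (Θ t - Θ' t) (Θ 0 - Θ' 0)
      linarith
    rw [hDdef]
    linarith
  -- primitive of g
  set w : ℝ → ℝ := fun t => ∫ s in (0:ℝ)..t, g s with hwdef
  have hwnn : ∀ t ∈ Set.Icc (0:ℝ) T, 0 ≤ w t := fun t ht =>
    intervalIntegral.integral_nonneg ht.1 (fun s _ => abs_nonneg _)
  have hwcont : ContinuousOn w (Set.Icc (0:ℝ) T) := by
    have h1 : IntegrableOn g (Set.uIcc (0:ℝ) T) volume := by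
      rwa [Set.uIcc_of_le hT.le]
    have := intervalIntegral.continuousOn_primitive_interval (f := g) (a := (0:ℝ)) (b := T) (μ := volume) h1
    rwa [Set.uIcc_of_le hT.le] at this
  have hwderiv : ∀ t ∈ Set.Ico (0:ℝ) T, HasDerivWithinAt w (g t) (Set.Ici t) t := by
    intro t ht
    have hmeasAt : StronglyMeasurableAtFilter g (𝓝[Set.Ioi t] t) volume := by
      refine ⟨Set.Icc 0 T, ?_, mg⟩
      rw [mem_nhdsWithin]
      exact ⟨Set.Iio T, isOpen_Iio, ht.2, fun s hs => ⟨le_trans ht.1 hs.2.le, hs.1.le⟩⟩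
    have hcont : ContinuousWithinAt g (Set.Ioi t) t := by
      have hYr := hYc.1 t ht
      have hY'r := hY'c.1 t ht
      have htend : Filter.Tendsto g (𝓝[Set.Ici t] t) (𝓝 (g t)) := (hYr.sub hY'r).abs
      exact htend.mono_left (nhdsWithin_mono _ Set.Ioi_subset_Ici_self)
    exact intervalIntegral.integral_hasDerivWithinAt_right
      (intInt _ gInt t ⟨ht.1, ht.2.le⟩) hmeasAt hcont
  have hgron := norm_le_gronwallBound_of_norm_deriv_right_le (f := w) (f' := g)
      (δ := 0) (K := K) (ε := D) (a := 0) (b := T) hwcont hwderiv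
      (by simp [hwdef]) ?_
  swap
  · intro t ht
    have hkey := key t ⟨ht.1, ht.2.le⟩
    have hwt := hwnn t ⟨ht.1, ht.2.le⟩
    rw [Real.norm_eq_abs, Real.norm_eq_abs, abs_of_nonneg hwt, abs_abs]
    show g t ≤ K * (∫ s in (0:ℝ)..t, g s) + D
    linarith [hkey]
  intro t ht
  have hkey := key t ht
  have hwt := hwnn t ht
  have hgr := hgron t ht
  rw [Real.norm_eq_abs, abs_of_nonneg hwt, sub_zero] at hgr
  have hkey' : g t ≤ D + K * w t := hkey
  have hfin : D + K * gronwallBound 0 K D t ≤ D * Real.exp (K * T) := by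
    rcases eq_or_ne K 0 with hK | hK
    · rw [hK]
      simp only [zero_mul, add_zero, Real.exp_zero] at *
      rw [hK] at *
      simp
    · rw [gronwallBound_of_K_ne_0 hK]
      have hexp : Real.exp (K * t) ≤ Real.exp (K * T) :=
        Real.exp_le_exp.2 (mul_le_mul_of_nonneg_left ht.2 hK0)
      have hexp1 : (1:ℝ) ≤ Real.exp (K * t) := by
        rw [← Real.exp_zero]
        exact Real.exp_le_exp.2 (mul_nonneg hK0 ht.1)
      have heq : D + K * (0 * Real.exp (K * t) + D / K * (Real.exp (K * t) - 1))
          = D * Real.exp (K * t) := by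
        field_simp
        ring
      rw [heq]
      exact mul_le_mul_of_nonneg_left hexp hD0
  have hstep : g t ≤ D + K * gronwallBound 0 K D t := by
    have := mul_le_mul_of_nonneg_left hgr hK0
    linarith [hkey']
  calc |Y t - Y' t| = g t := rfl
    _ ≤ D + K * gronwallBound 0 K D t := hstep
    _ ≤ D * Real.exp (K * T) := hfin
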